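/- Let v₁, …, v_k be points in the Euclidean plane ℝ² such that for all 1 ≤ i ≤ j ≤ k−1 the inner product ⟪v_{i+1} − v_i, v_{j+1} − v_j⟫ ≥ 0 (i.e., any two edge vectors of the polyline form an angle of at most 90°). Then the polyline (v₁, …, v_k) has increasing chords; in particular, for all indices 1 ≤ a ≤ b ≤ c ≤ d ≤ k it holds dist(v_b, v_c) ≤ dist(v_a, v_d). -/
import Mathlib


open Real EuclideanGeometry
open scoped RealInnerProductSpace

noncomputable section

abbrev Pt : Type := EuclideanSpace ℝ (Fin 2)

/-- Vertex characterization of self-approaching polylines: `v 0, v 1, …, v (n-1)`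
is self-approaching if for all `i < j ≤ n-1`, `⟪v (i+1) - v i, v j - v (i+1)⟫ ≥ 0`. -/
def SelfApproachingPts (n : ℕ) (v : ℕ → Pt) : Prop :=
  ∀ i j : ℕ, i < j → j < n → 0 ≤ ⟪v (i + 1) - v i, v j - v (i + 1)⟫

/-- A polyline has increasing chords if both it and its reverse are self-approaching. -/
def IncreasingChordsPts (n : ℕ) (v : ℕ → Pt) : Prop :=
  SelfApproachingPts n v ∧ SelfApproachingPts n (fun i => v (n - 1 - i))

lemma telescope_pts (v : ℕ → Pt) (a b : ℕ) (hab : a ≤ b) :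
    v b - v a = ∑ m ∈ Finset.Ico a b, (v (m + 1) - v m) := by
  induction b, hab using Nat.le_induction with
  | base => simp
  | succ n hn ih => rw [Finset.sum_Ico_succ_top (by omega), ← ih]; abel

lemma inner_nn (k : ℕ) (v : ℕ → Pt)
    (h : ∀ i j : ℕ, i ≤ j → j + 1 < k → 0 ≤ ⟪v (i + 1) - v i, v (j + 1) - v j⟫)
    (a b c d : ℕ) (hab : a ≤ b) (hcd : c ≤ d) (hb : b < k) (hd : d < k) :
    0 ≤ ⟪v b - v a, v d - v c⟫ := by
  rw [telescope_pts v a b hab, telescope_pts v c d hcd, sum_inner]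
  refine Finset.sum_nonneg fun m hm => ?_
  rw [inner_sum]
  refine Finset.sum_nonneg fun n hn => ?_
  simp only [Finset.mem_Ico] at hm hn
  rcases le_total m n with hmn | hmn
  · exact h m n hmn (by omega)
  · rw [real_inner_comm]; exact h n m hmn (by omega)

theorem stmt0 (k : ℕ) (v : ℕ → Pt)
    (h : ∀ i j : ℕ, i ≤ j → j + 1 < k → 0 ≤ ⟪v (i + 1) - v i, v (j + 1) - v j⟫) :
    IncreasingChordsPts k v ∧
      ∀ a b c d : ℕ, a ≤ b → b ≤ c → c ≤ d → d < k →
        dist (v b) (v c) ≤ dist (v a) (v d) := by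
  refine ⟨⟨fun i j hij hjk => inner_nn k v h i (i + 1) (i + 1) j (by omega) (by omega) (by omega) hjk,
    fun i j hij hjk => ?_⟩, fun a b c d hab hbc hcd hdk => ?_⟩
  · have h1 : k - 1 - (i + 1) = k - 2 - i := by omega
    have h2 : k - 2 - i + 1 = k - 1 - i := by omega
    have := inner_nn k v h (k - 2 - i) (k - 1 - i) (k - 1 - j) (k - 2 - i)
      (by omega) (by omega) (by omega) (by omega)
    simp only [h1]
    rw [show (v (k - 2 - i) - v (k - 1 - i)) = -(v (k - 1 - i) - v (k - 2 - i)) by abel,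
      show (v (k - 1 - j) - v (k - 2 - i)) = -(v (k - 2 - i) - v (k - 1 - j)) by abel,
      inner_neg_neg]
    exact this
  · set x := v b - v a with hx
    set y := v c - v b with hy
    set z := v d - v c with hz
    have hxy : 0 ≤ ⟪x, y⟫ := inner_nn k v h a b b c hab hbc (by omega) (by omega)
    have hxz : 0 ≤ ⟪x, z⟫ := inner_nn k v h a b c d hab hcd (by omega) hdk
    have hyz : 0 ≤ ⟪y, z⟫ := inner_nn k v h b c c d hbc hcd (by omega) hdk
    have hvd : v d - v a = x + y + z := by rw [hx, hy, hz]; abel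
    have hexp : ‖x + y + z‖ ^ 2
        = ‖x‖ ^ 2 + ‖y‖ ^ 2 + ‖z‖ ^ 2 + 2 * ⟪x, y⟫ + 2 * ⟪x, z⟫ + 2 * ⟪y, z⟫ := by
      simp only [← real_inner_self_eq_norm_sq, inner_add_left, inner_add_right]
      rw [real_inner_comm y x, real_inner_comm z x, real_inner_comm z y]; ring
    have hsq : ‖y‖ ^ 2 ≤ ‖x + y + z‖ ^ 2 := by
      rw [hexp]
      nlinarith [sq_nonneg ‖x‖, sq_nonneg ‖z‖]
    have : ‖y‖ ≤ ‖x + y + z‖ :=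
      (pow_le_pow_iff_left₀ (norm_nonneg _) (norm_nonneg _) two_ne_zero).mp hsq
    rw [dist_eq_norm, dist_eq_norm, norm_sub_rev (v b), ← hy, norm_sub_rev (v a), hvd]
    exact this
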